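/- For spectrally positive α-stable input (1 < α < 2) with Laplace exponent φ(s) = rs + Cs^α (r, C > 0), the inverse ψ satisfies ψ(s) = s/r - (C/r)(s/r)^α + o(s^α) as s ↓ 0. -/

import Mathlib

open Real Filter Topology Asymptotics

lemma aux_rpow_sub_rpow_le (p a b : ℝ) (hp : 1 ≤ p) (hb : 0 ≤ b) (hba : b ≤ a) :
    a ^ p - b ^ p ≤ p * a ^ (p - 1) * (a - b) := by
  rcases eq_or_lt_of_le hba with rfl | h
  · simp
  · obtain ⟨c, hc, hceq⟩ := exists_hasDerivAt_eq_slope (fun x => x ^ p)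
      (fun x => p * x ^ (p - 1)) h
      (fun x _ => ((Real.hasDerivAt_rpow_const (p := p) (Or.inr hp)).continuousAt).continuousWithinAt)
      (fun x _ => Real.hasDerivAt_rpow_const (Or.inr hp))
  -- hceq : p * c ^ (p-1) = (a^p - b^p) / (a - b)
    have hc0 : 0 ≤ c := le_trans hb hc.1.le
    have hca : c ≤ a := hc.2.le
    have hcpow : c ^ (p - 1) ≤ a ^ (p - 1) :=
      Real.rpow_le_rpow hc0 hca (by linarith)
    have hab : 0 < a - b := sub_pos.mpr h
    have : a ^ p - b ^ p = p * c ^ (p - 1) * (a - b) := by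
      rw [hceq]; field_simp
    rw [this]
    have hp0 : 0 < p := by linarith
    have : p * c ^ (p - 1) ≤ p * a ^ (p - 1) :=
      mul_le_mul_of_nonneg_left hcpow hp0.le
    exact mul_le_mul_of_nonneg_right this hab.le

/-- for φ(s) = rs + Cs^α with 1 < α < 2, r, C > 0, the inverse ψ satisfies
ψ(s) = s/r - (C/r)(s/r)^α + o(s^α) as s ↓ 0. -/
theorem stmt_16 (α r C : ℝ) (hα : 1 < α) (hα2 : α < 2) (hr : 0 < r) (hC : 0 < C)
    (φ ψ : ℝ → ℝ)
    (hφ : ∀ s : ℝ, φ s = r * s + C * s ^ α)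
    (hψ : ∀ s : ℝ, 0 ≤ s → 0 ≤ ψ s ∧ φ (ψ s) = s) :
    (fun s : ℝ => ψ s - (s/r - (C/r) * (s/r) ^ α)) =o[𝓝[>] 0] fun s => s ^ α := by
  set K : ℝ := (C/r)^2 * α / (r ^ (α - 1) * r ^ α) with hK
  have hbigO : (fun s : ℝ => ψ s - (s/r - (C/r) * (s/r) ^ α))
      =O[𝓝[>] 0] fun s => s ^ (α - 1) * s ^ α := by
    rw [Asymptotics.isBigO_iff]
    refine ⟨K, Filter.eventually_of_mem self_mem_nhdsWithin fun s hs => ?_⟩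
    have hs0 : 0 < s := hs
    set y := ψ s with hy
    obtain ⟨hy0, heq⟩ := hψ s hs0.le
    rw [hφ] at heq
    set x := s / r with hx
    have hx0 : 0 < x := div_pos hs0 hr
    have hyα : 0 ≤ C * y ^ α := mul_nonneg hC.le (Real.rpow_nonneg hy0 _)
    have hyx : y ≤ x := by
      rw [hx, le_div_iff₀ hr]; nlinarith
    have hyval : y = x - (C / r) * y ^ α := by
      rw [hx]; field_simp; linarith
    have gval : ψ s - (s/r - (C/r) * (s/r) ^ α)
        = (C/r) * (x ^ α - y ^ α) := by
      rw [← hy, ← hx]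
      nth_rewrite 1 [hyval]
      ring
    have hpow_le : y ^ α ≤ x ^ α := Real.rpow_le_rpow hy0 hyx (by linarith)
    have hCr : 0 < C / r := div_pos hC hr
    have hmvt : x ^ α - y ^ α ≤ α * x ^ (α - 1) * (x - y) :=
      aux_rpow_sub_rpow_le α x y hα.le hy0 hyx
    have hxy : x - y ≤ (C / r) * x ^ α := by
      nth_rewrite 1 [hyval]
      have : (C/r) * y ^ α ≤ (C/r) * x ^ α := by
        exact mul_le_mul_of_nonneg_left hpow_le hCr.le
      linarith
    have hxpow1 : 0 ≤ x ^ (α - 1) := Real.rpow_nonneg hx0.le _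
    have hxpow : 0 ≤ x ^ α := Real.rpow_nonneg hx0.le _
    have hbound : x ^ α - y ^ α ≤ α * x ^ (α - 1) * ((C/r) * x ^ α) := by
      have := mul_le_mul_of_nonneg_left hxy
        (mul_nonneg (by linarith : (0:ℝ) ≤ α) hxpow1)
      linarith
    have hxdiv1 : x ^ (α - 1) = s ^ (α - 1) / r ^ (α - 1) := by
      rw [hx, Real.div_rpow hs0.le hr.le]
    have hxdiv : x ^ α = s ^ α / r ^ α := by
      rw [hx, Real.div_rpow hs0.le hr.le]
    have hnorm1 : ‖ψ s - (s/r - (C/r) * (s/r) ^ α)‖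
        = (C/r) * (x ^ α - y ^ α) := by
      rw [gval, Real.norm_eq_abs, abs_of_nonneg]
      exact mul_nonneg hCr.le (by linarith)
    rw [hnorm1, Real.norm_eq_abs, abs_of_nonneg
      (mul_nonneg (Real.rpow_nonneg hs0.le _) (Real.rpow_nonneg hs0.le _))]
    have h1 : (C/r) * (x ^ α - y ^ α) ≤ (C/r) * (α * x ^ (α - 1) * ((C/r) * x ^ α)) :=
      mul_le_mul_of_nonneg_left hbound hCr.le
    have h2 : (C/r) * (α * x ^ (α - 1) * ((C/r) * x ^ α))
        = K * (s ^ (α - 1) * s ^ α) := by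
      rw [hxdiv1, hxdiv, hK]
      field_simp
    linarith [h1, h2 ▸ h1]
  have hlittle : (fun s : ℝ => s ^ (α - 1) * s ^ α) =o[𝓝[>] 0] fun s => s ^ α := by
    have h3 : (fun s : ℝ => s ^ (α - 1)) =o[𝓝[>] 0] (fun _ => (1:ℝ)) := by
      rw [isLittleO_one_iff]
      have := (Real.continuousAt_rpow_const 0 (α - 1) (Or.inr (by linarith))).tendsto
      rw [Real.zero_rpow (by linarith : α - 1 ≠ 0)] at this
      exact this.mono_left nhdsWithin_le_nhds
    simpa using h3.mul_isBigO (isBigO_refl (fun s : ℝ => s ^ α) _)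
  exact hbigO.trans_isLittleO hlittle
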